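/- arXiv:0709.1196 — 2 statements merged into one kernel-verified Lean document; each statement's English description precedes it below -/
import Mathlib

section
/- Let w, p, u, v ∈ ℂ and let V be the 4×4 complex matrix with rows (w, 0, p, 0), (0, w, 0, p), (0, 0, −w, −u), (0, 0, −p, −v). If (w + v)² ≠ 4(wv − up) and 2w² + 2wv − up ≠ 0, then V has exactly three distinct complex eigenvalues, namely w (with algebraic multiplicity two) and the two distinct roots of X² + (w + v)X + (wv − up). -/
/- STATEMENT 9: under the nondegeneracy conditions (w+v)² ≠ 4(wv − up) and 2w² + 2wv − up ≠ 0,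
the matrix V has exactly three distinct eigenvalues: w with algebraic multiplicity two, and the
two distinct roots of X² + (w+v)X + (wv − up); i.e. the multiset of roots of the characteristic
polynomial is {w, w, r₁, r₂} with r₁, r₂ the distinct roots of the quadratic, both ≠ w. -/

open Polynomial

theorem statement9 (w p u v : ℂ)
    (V : Matrix (Fin 4) (Fin 4) ℂ)
    (hV : V = !![w, 0, p, 0;
                 0, w, 0, p;
                 0, 0, -w, -u;
                 0, 0, -p, -v])
    (hdisc : (w + v) ^ 2 ≠ 4 * (w * v - u * p))
    (hw : 2 * w ^ 2 + 2 * w * v - u * p ≠ 0) :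
    ∃ r₁ r₂ : ℂ, r₁ ≠ r₂ ∧ r₁ ≠ w ∧ r₂ ≠ w ∧
      r₁ ^ 2 + (w + v) * r₁ + (w * v - u * p) = 0 ∧
      r₂ ^ 2 + (w + v) * r₂ + (w * v - u * p) = 0 ∧
      V.charpoly.roots = {w, w, r₁, r₂} ∧
      V.charpoly.roots.toFinset.card = 3 := by
  obtain ⟨s, hs⟩ : ∃ s : ℂ, s ^ 2 = (w + v) ^ 2 - 4 * (w * v - u * p) :=
    IsAlgClosed.exists_pow_nat_eq _ (n := 2) (by norm_num)
  have hs0 : s ≠ 0 := by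
    intro h
    apply hdisc
    rw [h] at hs
    linear_combination -hs
  set r₁ : ℂ := (-(w + v) + s) / 2 with hr₁
  set r₂ : ℂ := (-(w + v) - s) / 2 with hr₂
  have hq₁ : r₁ ^ 2 + (w + v) * r₁ + (w * v - u * p) = 0 := by
    rw [hr₁]; field_simp; linear_combination hs
  have hq₂ : r₂ ^ 2 + (w + v) * r₂ + (w * v - u * p) = 0 := by
    rw [hr₂]; field_simp; linear_combination hs
  have hne : r₁ ≠ r₂ := by
    intro h
    apply hs0
    have h2 : r₁ - r₂ = s := by rw [hr₁, hr₂]; ring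
    rw [h, sub_self] at h2
    exact h2.symm
  have hwr : ∀ r : ℂ, r ^ 2 + (w + v) * r + (w * v - u * p) = 0 → r ≠ w := by
    intro r hr h
    apply hw
    rw [h] at hr
    linear_combination hr
  have hsum : r₁ + r₂ = -(w + v) := by rw [hr₁, hr₂]; ring
  have hprod : r₁ * r₂ = w * v - u * p := by
    rw [hr₁, hr₂]; field_simp; linear_combination -hs
  have hcp : V.charpoly = (X - C w) * ((X - C w) * ((X - C r₁) * (X - C r₂))) := by
    rw [Matrix.charpoly, hV]
    simp [Matrix.det_succ_row_zero, Fin.sum_univ_succ, Matrix.charmatrix_apply,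
      Matrix.diagonal, Fin.succAbove]
    left
    have h1 : C r₁ + C r₂ = -C w - C v := by rw [← map_add, hsum, map_neg, map_add]; ring
    have h2 : C r₁ * C r₂ = C w * C v - C u * C p := by
      rw [← map_mul, hprod, map_sub, map_mul, map_mul]
    linear_combination (X : ℂ[X]) * h1 - h2
  have n1 : (X - C r₁) * (X - C r₂) ≠ 0 :=
    mul_ne_zero (X_sub_C_ne_zero r₁) (X_sub_C_ne_zero r₂)
  have n2 : (X - C w) * ((X - C r₁) * (X - C r₂)) ≠ 0 :=
    mul_ne_zero (X_sub_C_ne_zero w) n1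
  have hroots : V.charpoly.roots = {w, w, r₁, r₂} := by
    rw [hcp, roots_mul (mul_ne_zero (X_sub_C_ne_zero w) n2), roots_mul n2, roots_mul n1,
        roots_X_sub_C, roots_X_sub_C, roots_X_sub_C]
    simp only [Multiset.singleton_add]
    rfl
  refine ⟨r₁, r₂, hne, hwr r₁ hq₁, hwr r₂ hq₂, hq₁, hq₂, hroots, ?_⟩
  rw [hroots]
  rw [show ({w, w, r₁, r₂} : Multiset ℂ).toFinset = ({w, r₁, r₂} : Finset ℂ) by
    simp only [Multiset.insert_eq_cons, Multiset.toFinset_cons, Multiset.toFinset_singleton,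
      Finset.insert_idem]]
  rw [Finset.card_insert_of_notMem (by
        simp only [Finset.mem_insert, Finset.mem_singleton]
        push_neg
        exact ⟨(hwr r₁ hq₁).symm, (hwr r₂ hq₂).symm⟩),
      Finset.card_insert_of_notMem (by simp [hne]),
      Finset.card_singleton]
end

section
/- Let 𝒜 be a normed ring, let a, b ∈ 𝒜 be constants, and let Ψ, U : ℝ² → 𝒜 be differentiable functions of (x, t) such that for all (x, t): a·Ψ = Ψ·b, Ψ·U = 0, and ∂_t Ψ + a·(∂_x Ψ) = 0. Then for every natural number m, Ψ·(bᵐ·U) = 0 for all (x, t), and moreover Ψ·( ∂_t U + b·(∂_x U) ) = 0 for all (x, t). -/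
/- STATEMENT 12: E⁽¹⁾ = bᵐ·U and E⁽²⁾ = ∂_t U + b·∂_x U are again solutions of the homogeneous
equation Ψ·E = 0 in the dressing construction. -/

/-- `∂_x` of an 𝒜-valued function on ℝ², variables `(x, t)`. -/
noncomputable def pdx {𝒜 : Type*} [NormedRing 𝒜] [NormedAlgebra ℝ 𝒜]
    (f : ℝ × ℝ → 𝒜) (z : ℝ × ℝ) : 𝒜 := fderiv ℝ f z (1, 0)

/-- `∂_t` of an 𝒜-valued function on ℝ², variables `(x, t)`. -/
noncomputable def pdt {𝒜 : Type*} [NormedRing 𝒜] [NormedAlgebra ℝ 𝒜]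
    (f : ℝ × ℝ → 𝒜) (z : ℝ × ℝ) : 𝒜 := fderiv ℝ f z (0, 1)

theorem statement12 {𝒜 : Type*} [NormedRing 𝒜] [NormedAlgebra ℝ 𝒜]
    (a b : 𝒜) (Ψ U : ℝ × ℝ → 𝒜)
    (hΨ : Differentiable ℝ Ψ) (hU : Differentiable ℝ U)
    (hint : ∀ z, a * Ψ z = Ψ z * b)
    (hhom : ∀ z, Ψ z * U z = 0)
    (hevol : ∀ z, pdt Ψ z + a * pdx Ψ z = 0) :
    (∀ m : ℕ, ∀ z, Ψ z * (b ^ m * U z) = 0) ∧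
    (∀ z, Ψ z * (pdt U z + b * pdx U z) = 0) := by
  have hpow : ∀ m : ℕ, ∀ z, Ψ z * b ^ m = a ^ m * Ψ z := by
    intro m
    induction m with
    | zero => simp
    | succ n ih =>
      intro z
      rw [pow_succ, ← mul_assoc, ih, mul_assoc, ← hint, ← mul_assoc, ← pow_succ]
  have hpart1 : ∀ m : ℕ, ∀ z, Ψ z * (b ^ m * U z) = 0 := by
    intro m z
    rw [← mul_assoc, hpow, mul_assoc, hhom, mul_zero]
  refine ⟨hpart1, fun z => ?_⟩
  -- derivative of Ψ * U is zero
  have hprod : ∀ v : ℝ × ℝ, fderiv ℝ Ψ z v * U z + Ψ z * fderiv ℝ U z v = 0 := by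
    intro v
    have h : HasFDerivAt (fun w => Ψ w * U w)
        ((Ψ z) • (fderiv ℝ U z) + (fderiv ℝ Ψ z).smulRight (U z)) z :=
      ((hΨ z).hasFDerivAt.mul' (hU z).hasFDerivAt)
    have h0 : HasFDerivAt (fun w : ℝ × ℝ => Ψ w * U w) (0 : (ℝ × ℝ) →L[ℝ] 𝒜) z := by
      have : (fun w : ℝ × ℝ => Ψ w * U w) = fun _ => (0 : 𝒜) := funext hhom
      rw [this]
      exact hasFDerivAt_const _ _
    have := h.unique h0
    have := congrArg (fun L : (ℝ × ℝ) →L[ℝ] 𝒜 => L v) this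
    simpa [add_comm] using this
  have hx := hprod (1, 0)
  have ht := hprod (0, 1)
  have hx' : Ψ z * pdx U z = - (pdx Ψ z * U z) := by
    rw [pdx, pdx, eq_neg_of_add_eq_zero_right hx]
  have ht' : Ψ z * pdt U z = - (pdt Ψ z * U z) := by
    rw [pdt, pdt, eq_neg_of_add_eq_zero_right ht]
  have hb : Ψ z * (b * pdx U z) = - (a * (pdx Ψ z * U z)) := by
    rw [← mul_assoc, ← hint, mul_assoc, hx', mul_neg]
  calc Ψ z * (pdt U z + b * pdx U z)
      = Ψ z * pdt U z + Ψ z * (b * pdx U z) := mul_add _ _ _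
    _ = -((pdt Ψ z + a * pdx Ψ z) * U z) := by
        rw [ht', hb, add_mul, neg_add, mul_assoc]
    _ = 0 := by rw [hevol]; simp
end
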